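/- Let n ≥ 2 and r_0, r_1, ..., r_n be complex numbers with n+1 even and r_j = r_{n-j+1} for j = 1, ..., (n-1)/2. Let M± be the (n+1)×(n+1) symmetric tridiagonal matrix with diagonal entries t ± r_0, t, t, ..., t, t ± r_0 and off-diagonal entries r_1, r_2, ..., r_n. Then det(M±) equals the product of the determinants of the two ((n+1)/2)×((n+1)/2) symmetric tridiagonal matrices with diagonal (t ± r_0, t, ..., t, t + r_{(n+1)/2}) and (t ± r_0, t, ..., t, t − r_{(n+1)/2}) respectively, both with off-diagonal entries r_1, ..., r_{(n-1)/2}. -/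

import Mathlib

open Matrix

/-- The `k × k` tridiagonal matrix with diagonal `d`, superdiagonal `sup`
(entry `sup i` at position `(i, i+1)`) and subdiagonal `sub`
(entry `sub j` at position `(j+1, j)`). -/
def tri (k : ℕ) (d sup sub : ℕ → ℂ) : Matrix (Fin k) (Fin k) ℂ :=
  Matrix.of fun i j =>
    if (i : ℕ) = (j : ℕ) then d i
    else if (i : ℕ) + 1 = (j : ℕ) then sup i
    else if (j : ℕ) + 1 = (i : ℕ) then sub j
    else 0

private lemma det_blocks {k : ℕ} (A B : Matrix (Fin k) (Fin k) ℂ) :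
    (fromBlocks A B B A).det = (A + B).det * (A - B).det := by
  have h : fromBlocks 1 0 1 1 * fromBlocks A B B A * fromBlocks 1 0 (-1) 1
      = fromBlocks (A - B) B 0 (A + B) := by
    rw [fromBlocks_multiply, fromBlocks_multiply]
    ext (i|i) (j|j) <;> simp [fromBlocks] <;> abel_nf
  have h2 := congrArg Matrix.det h
  rw [det_mul, det_mul, det_fromBlocks_zero₁₂ (1 : Matrix (Fin k) (Fin k) ℂ) 1 1,
    det_fromBlocks_zero₁₂ (1 : Matrix (Fin k) (Fin k) ℂ) (-1) 1,
    det_fromBlocks_zero₂₁, det_one] at h2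
  rw [mul_comm (A - B).det] at h2
  simpa using h2

private def flipEquiv (m : ℕ) : Fin (m+1) ⊕ Fin (m+1) ≃ Fin (2*m+2) where
  toFun := Sum.elim (fun i => ⟨i, by omega⟩) (fun i => ⟨2*m+1 - (i:ℕ), by omega⟩)
  invFun := fun j => if h : (j:ℕ) < m+1 then .inl ⟨j, h⟩ else .inr ⟨2*m+1 - (j:ℕ), by omega⟩
  left_inv := by
    rintro (⟨i,hi⟩|⟨i,hi⟩)
    · simp only [Sum.elim_inl]
      exact dif_pos hi
    · simp only [Sum.elim_inr]
      refine (dif_neg (show ¬ (2*m+1-i < m+1) by omega)).trans ?_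
      simp only [Sum.inr.injEq]
      ext
      simp
      omega
  right_inv := by
    rintro ⟨j,hj⟩
    dsimp only
    by_cases h : j < m+1
    · rw [dif_pos h]
      rfl
    · rw [dif_neg h]
      simp only [Sum.elim_inr]
      ext
      simp
      omega

theorem stmt_2 (m : ℕ) (hm : 1 ≤ m) (t : ℂ) (r : ℕ → ℂ) (ε : ℂ) (hε : ε = 1 ∨ ε = -1)
    (hpal : ∀ j, 1 ≤ j → j ≤ m → r j = r (2 * m + 2 - j)) :
    (tri (2 * m + 2) (fun i => if i = 0 ∨ i = 2 * m + 1 then t + ε * r 0 else t)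
        (fun i => r (i + 1)) (fun i => r (i + 1))).det =
      (tri (m + 1)
          (fun i => if i = 0 then t + ε * r 0 else if i = m then t + r (m + 1) else t)
          (fun i => r (i + 1)) (fun i => r (i + 1))).det *
      (tri (m + 1)
          (fun i => if i = 0 then t + ε * r 0 else if i = m then t - r (m + 1) else t)
          (fun i => r (i + 1)) (fun i => r (i + 1))).det := by
  set A := tri (m+1) (fun i => if i = 0 then t + ε * r 0 else t)
      (fun i => r (i + 1)) (fun i => r (i + 1)) with hA
  set E : Matrix (Fin (m+1)) (Fin (m+1)) ℂ :=
      Matrix.of (fun i j : Fin (m+1) => if (i:ℕ) = m ∧ (j:ℕ) = m then r (m+1) else 0) with hE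
  set M := tri (2 * m + 2) (fun i => if i = 0 ∨ i = 2 * m + 1 then t + ε * r 0 else t)
      (fun i => r (i + 1)) (fun i => r (i + 1)) with hM
  have hblocks : M.submatrix (flipEquiv m) (flipEquiv m) = fromBlocks A E E A := by
    ext (⟨i,hi⟩|⟨i,hi⟩) (⟨j,hj⟩|⟨j,hj⟩) <;>
      simp only [hM, hA, hE, submatrix_apply, flipEquiv, Equiv.coe_fn_mk, Sum.elim_inl,
        Sum.elim_inr, fromBlocks_apply₁₁, fromBlocks_apply₁₂, fromBlocks_apply₂₁,
        fromBlocks_apply₂₂, tri, Matrix.of_apply] <;>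
      split_ifs <;>
      first
        | rfl
        | omega
        | (congr 1; omega)
        | (rw [hpal (j+1) (by omega) (by omega)]; congr 1; omega)
        | (rw [hpal (i+1) (by omega) (by omega)]; congr 1; omega)
  have h1 : A + E = tri (m + 1)
      (fun i => if i = 0 then t + ε * r 0 else if i = m then t + r (m + 1) else t)
      (fun i => r (i + 1)) (fun i => r (i + 1)) := by
    ext ⟨i,hi⟩ ⟨j,hj⟩
    simp only [hA, hE, Matrix.add_apply, tri, Matrix.of_apply]
    split_ifs <;> first | ring1 | (exfalso; omega) | simp
  have h2 : A - E = tri (m + 1)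
      (fun i => if i = 0 then t + ε * r 0 else if i = m then t - r (m + 1) else t)
      (fun i => r (i + 1)) (fun i => r (i + 1)) := by
    ext ⟨i,hi⟩ ⟨j,hj⟩
    simp only [hA, hE, Matrix.sub_apply, tri, Matrix.of_apply]
    split_ifs <;> first | ring1 | (exfalso; omega) | simp
  calc M.det = (M.submatrix (flipEquiv m) (flipEquiv m)).det :=
        (Matrix.det_submatrix_equiv_self (flipEquiv m) M).symm
    _ = (fromBlocks A E E A).det := by rw [hblocks]
    _ = (A + E).det * (A - E).det := det_blocks A E
    _ = _ := by rw [h1, h2]
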